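/- For a bounded spectral family E in a complete orthomodular lattice, on a principal dual ideal H_P the observable function satisfies f_E(H_P) = min{λ ∈ ℝ : E_λ ≥ P}; in particular the infimum is attained. -/
import Mathlib


def IsDualIdeal {L : Type} [Lattice L] [OrderBot L] (J : Set L) : Prop :=
  J.Nonempty ∧ ⊥ ∉ J ∧ (∀ a ∈ J, ∀ b ∈ J, a ⊓ b ∈ J) ∧ (∀ a ∈ J, ∀ b : L, a ≤ b → b ∈ J)

class Orthomodular (L : Type) [CompleteLattice L] where
  compl : L → L
  compl_compl : ∀ x : L, compl (compl x) = x
  compl_antitone : ∀ x y : L, x ≤ y → compl y ≤ compl x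
  inf_compl_eq_bot : ∀ x : L, x ⊓ compl x = ⊥
  sup_compl_eq_top : ∀ x : L, x ⊔ compl x = ⊤
  orthomodular : ∀ x y : L, x ≤ y → y = x ⊔ (y ⊓ compl x)

/-- A bounded spectral family in a complete lattice: monotone, right-continuous,
eventually `⊥` to the left and eventually `⊤` to the right. -/
structure SpectralFamily (L : Type) [CompleteLattice L] where
  E : ℝ → L
  mono : Monotone E
  rightCont : ∀ l : ℝ, E l = ⨅ (m : ℝ) (_ : l < m), E m
  bddBelow : ∃ l : ℝ, E l = ⊥
  bddAbove : ∃ l : ℝ, E l = ⊤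

/-- The observable function of a bounded spectral family on dual ideals. -/
noncomputable def obsFun {L : Type} [CompleteLattice L] (E : SpectralFamily L)
    (J : Set L) : ℝ :=
  sInf {l : ℝ | E.E l ∈ J}


/-- On a principal dual ideal `H_P`, the observable function attains its infimum:
`f_E(H_P) = min {λ | P ≤ E_λ}`. -/
theorem stmt6 {L : Type} [CompleteLattice L] [Orthomodular L] (E : SpectralFamily L)
    (P : L) (hP : P ≠ ⊥) :
    IsLeast {l : ℝ | P ≤ E.E l} (obsFun E {Q : L | P ≤ Q}) := by
  have hset : {l : ℝ | E.E l ∈ {Q : L | P ≤ Q}} = {l : ℝ | P ≤ E.E l} := rfl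
  set S := {l : ℝ | P ≤ E.E l} with hS
  obtain ⟨a, ha⟩ := E.bddAbove
  have hne : S.Nonempty := ⟨a, by simp [hS, ha]⟩
  obtain ⟨b, hb⟩ := E.bddBelow
  have hbdd : BddBelow S := by
    refine ⟨b, fun l hl => ?_⟩
    by_contra h
    push_neg at h
    have : E.E l ≤ ⊥ := hb ▸ E.mono h.le
    exact hP (le_antisymm (hl.trans this) bot_le)
  have hobs : obsFun E {Q : L | P ≤ Q} = sInf S := by rw [obsFun, hset]
  rw [hobs]
  constructor
  · show P ≤ E.E (sInf S)
    rw [E.rightCont (sInf S)]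
    refine le_iInf fun m => le_iInf fun hm => ?_
    obtain ⟨l, hl, hlm⟩ := exists_lt_of_csInf_lt hne hm
    exact le_trans hl (E.mono hlm.le)
  · exact fun l hl => csInf_le hbdd hl
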